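/- For a complex number z with |z| < 1, the double polylogarithm satisfies 2·Li_{1,1}(z,z) = Li_1(z)^2 and 2·Li_{1,1}(z,z^2) + Li_2(z^2) = Li_1(z)^2, where Li_{1,1}(z1,z2) = Σ_{m1>m2>0} z1^{m1-m2} z2^{m2}/(m1·m2), Li_1(z) = Σ_{m>0} z^m/m, and Li_2(w) = Σ_{m>0} w^m/m^2. -/

import Mathlib

noncomputable def Li (k : ℕ) (z : ℂ) : ℂ :=
  ∑' m : ℕ, if 0 < m then z ^ m / (m : ℂ) ^ k else 0

noncomputable def Li2 (k1 k2 : ℕ) (z1 z2 : ℂ) : ℂ :=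
  ∑' p : ℕ × ℕ, if p.2 < p.1 ∧ 0 < p.2 then
    z1 ^ (p.1 - p.2) * z2 ^ p.2 / ((p.1 : ℂ) ^ k1 * (p.2 : ℂ) ^ k2) else 0

section helper

variable (z : ℂ)

private noncomputable def aa (m : ℕ) : ℂ := if 0 < m then z ^ m / (m : ℂ) else 0

private lemma summable_norm_aa (hz : ‖z‖ < 1) : Summable fun m => ‖aa z m‖ := by
  apply Summable.of_nonneg_of_le (fun _ => norm_nonneg _) _
    (summable_geometric_of_lt_one (norm_nonneg z) hz)
  intro m
  rcases Nat.eq_zero_or_pos m with h | h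
  · simp [aa, h]
  · simp only [aa, if_pos h, norm_div, norm_pow, Complex.norm_natCast]
    apply div_le_self (by positivity)
    exact_mod_cast h

end helper

theorem double_polylog_weight_two (z : ℂ) (hz : ‖z‖ < 1) :
    2 * Li2 1 1 z z = (Li 1 z) ^ 2 ∧
    2 * Li2 1 1 z (z ^ 2) + Li 2 (z ^ 2) = (Li 1 z) ^ 2 := by
  set a : ℕ → ℂ := aa z with ha
  have hsa : Summable fun m => ‖a m‖ := summable_norm_aa z hz
  set G : ℕ × ℕ → ℂ := fun p => a p.1 * a p.2 with hG
  have hsGn : Summable fun p => ‖G p‖ := hsa.mul_norm hsa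
  have hsG : Summable G := hsGn.of_norm
  have hLi : Li 1 z = ∑' m, a m := by
    simp [Li, ha, aa]
  have hsq : (Li 1 z) ^ 2 = ∑' p, G p := by
    rw [hLi, sq, tsum_mul_tsum_of_summable_norm hsa hsa]
  have haval : ∀ m : ℕ, 0 < m → a m = z ^ m / m := fun m hm => by simp [ha, aa, hm]
  have ha0 : a 0 = 0 := by simp [ha, aa]
  ------------------------------------------------------------------
  -- Second identity: split G over trichotomy
  ------------------------------------------------------------------
  set T : ℕ × ℕ → ℂ := fun p => if p.2 < p.1 then G p else 0 with hT
  set S : ℕ × ℕ → ℂ := fun p => if p.1 < p.2 then G p else 0 with hS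
  set D : ℕ × ℕ → ℂ := fun p => if p.1 = p.2 then G p else 0 with hD
  have hsT : Summable T := by
    apply Summable.of_norm_bounded hsGn
    intro p; simp only [hT]; split <;> simp [norm_nonneg]
  have hsS : Summable S := by
    apply Summable.of_norm_bounded hsGn
    intro p; simp only [hS]; split <;> simp [norm_nonneg]
  have hsD : Summable D := by
    apply Summable.of_norm_bounded hsGn
    intro p; simp only [hD]; split <;> simp [norm_nonneg]
  have hsplit : ∀ p, G p = T p + S p + D p := by
    intro p
    rcases lt_trichotomy p.1 p.2 with h | h | h
    · simp [hT, hS, hD, h, not_lt_of_gt h, h.ne]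
    · simp [hT, hS, hD, h]
    · simp [hT, hS, hD, h, not_lt_of_gt h, h.ne']
  have htsum_split : ∑' p, G p = (∑' p, T p) + (∑' p, S p) + ∑' p, D p := by
    calc ∑' p, G p = ∑' p, (T p + S p + D p) := tsum_congr hsplit
    _ = (∑' p, (T p + S p)) + ∑' p, D p := Summable.tsum_add (hsT.add hsS) hsD
    _ = (∑' p, T p) + (∑' p, S p) + ∑' p, D p := by rw [Summable.tsum_add hsT hsS]
  have hST : ∑' p, S p = ∑' p, T p := by
    rw [← (Equiv.prodComm ℕ ℕ).tsum_eq T]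
    apply tsum_congr
    intro p
    simp only [hS, hT, hG, Equiv.prodComm_apply, Prod.fst_swap, Prod.snd_swap]
    split <;> [exact mul_comm _ _; rfl]
  have hdiaginj : Function.Injective (fun m : ℕ => ((m, m) : ℕ × ℕ)) := by
    intro m n h; exact (Prod.mk.injEq _ _ _ _ ▸ h).1
  have hDLi : ∑' p, D p = Li 2 (z ^ 2) := by
    have hsupp : Function.support D ⊆ Set.range (fun m : ℕ => ((m, m) : ℕ × ℕ)) := by
      intro p hp
      simp only [Function.mem_support, hD] at hp
      by_cases h : p.1 = p.2
      · exact ⟨p.1, by simp [Prod.ext_iff, h]⟩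
      · simp [h] at hp
    rw [← hdiaginj.tsum_eq hsupp]
    rw [Li]
    apply tsum_congr
    intro m
    rcases Nat.eq_zero_or_pos m with h | h
    · simp [hD, hG, h, ha0]
    · simp only [if_pos h, hD, hG, if_pos rfl, haval m h]
      rw [div_mul_div_comm, ← pow_add, ← two_mul, pow_mul, sq (m : ℂ)]
  have hTLi2 : Li2 1 1 z (z ^ 2) = ∑' p, T p := by
    rw [Li2]
    apply tsum_congr
    intro p
    simp only [hT, hG, pow_one]
    by_cases h : p.2 < p.1 ∧ 0 < p.2
    · rw [if_pos h, if_pos h.1, haval _ (lt_trans h.2 h.1), haval _ h.2,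
        div_mul_div_comm, ← pow_add, ← pow_mul, ← pow_add]
      congr 2
      omega
    · rw [if_neg h]
      push_neg at h
      by_cases h1 : p.2 < p.1
      · rw [if_pos h1]
        have : p.2 = 0 := by omega
        simp [this, ha0]
      · rw [if_neg h1]
  ------------------------------------------------------------------
  -- First identity: reindex G via (m,n) ↦ (m+n, n)
  ------------------------------------------------------------------
  set i : ℕ × ℕ → ℕ × ℕ := fun q => (q.1 + q.2, q.2) with hi
  have hiinj : Function.Injective i := by
    intro q r h
    simp only [hi, Prod.ext_iff] at h ⊢
    omega
  set H : ℕ × ℕ → ℂ := fun p =>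
    if p.2 < p.1 ∧ 0 < p.2 then z ^ p.1 / (((p.1 - p.2 : ℕ) : ℂ) * (p.2 : ℂ)) else 0 with hH
  have hHi : ∀ q, H (i q) = G q := by
    rintro ⟨m, n⟩
    simp only [hH, hG, hi]
    by_cases h : 0 < m ∧ 0 < n
    · rw [if_pos (by omega), haval _ h.1, haval _ h.2, div_mul_div_comm, ← pow_add,
        Nat.add_sub_cancel]
    · rw [if_neg (by omega)]
      rcases (by omega : m = 0 ∨ n = 0) with h0 | h0 <;> simp [h0, ha0]
  have hHsupp : Function.support H ⊆ Set.range i := by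
    intro p hp
    simp only [Function.mem_support, hH] at hp
    by_cases h : p.2 < p.1 ∧ 0 < p.2
    · refine ⟨(p.1 - p.2, p.2), ?_⟩
      simp only [hi]
      have h1 : p.1 - p.2 + p.2 = p.1 := by omega
      rw [h1]
    · simp [h] at hp
  have htsumGH : ∑' p, G p = ∑' p, H p := by
    rw [← hiinj.tsum_eq hHsupp]
    exact tsum_congr fun q => (hHi q).symm
  have hsHn : Summable fun p => ‖H p‖ := by
    rw [← hiinj.summable_iff (f := fun p => ‖H p‖)
      (fun p hp => by simpa using Function.notMem_support.mp fun hs => hp (hHsupp hs))]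
    exact hsGn.congr fun q => by simp [Function.comp, hHi q]
  have hsH : Summable H := hsHn.of_norm
  set F1 : ℕ × ℕ → ℂ := fun p =>
    if p.2 < p.1 ∧ 0 < p.2 then z ^ p.1 / ((p.1 : ℂ) * (p.2 : ℂ)) else 0 with hF1
  set F1' : ℕ × ℕ → ℂ := fun p =>
    if p.2 < p.1 ∧ 0 < p.2 then z ^ p.1 / ((p.1 : ℂ) * ((p.1 - p.2 : ℕ) : ℂ)) else 0 with hF1'
  have hsF1 : Summable F1 := by
    apply Summable.of_norm_bounded hsHn
    intro p
    simp only [hF1, hH]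
    by_cases h : p.2 < p.1 ∧ 0 < p.2
    · rw [if_pos h, if_pos h]
      simp only [norm_div, norm_mul, norm_pow, Complex.norm_natCast]
      have h1 : ((p.1 - p.2 : ℕ) : ℝ) ≤ (p.1 : ℝ) := by exact_mod_cast Nat.sub_le _ _
      have h2 : (0 : ℝ) < ((p.1 - p.2 : ℕ) : ℝ) := by
        have : 0 < p.1 - p.2 := by omega
        exact_mod_cast this
      have h3 : (0 : ℝ) < (p.2 : ℝ) := by exact_mod_cast h.2
      gcongr
    · simp [h]
  have hHsplit : ∀ p, H p = F1 p + F1' p := by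
    intro p
    simp only [hH, hF1, hF1']
    by_cases h : p.2 < p.1 ∧ 0 < p.2
    · rw [if_pos h, if_pos h, if_pos h]
      have hC : ((p.1 - p.2 : ℕ) : ℂ) = (p.1 : ℂ) - (p.2 : ℂ) := by
        push_cast [Nat.cast_sub h.1.le]; ring
      have hA : (p.1 : ℂ) ≠ 0 := by exact Nat.cast_ne_zero.mpr (by omega)
      have hB : (p.2 : ℂ) ≠ 0 := by exact Nat.cast_ne_zero.mpr (by omega)
      have hCne : ((p.1 - p.2 : ℕ) : ℂ) ≠ 0 := Nat.cast_ne_zero.mpr (by omega)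
      rw [hC] at hCne ⊢
      field_simp
      ring
    · simp [h]
  have hsF1' : Summable F1' := by
    refine (hsH.sub hsF1).congr fun p => ?_
    rw [hHsplit p]; ring
  have htsumH : ∑' p, H p = (∑' p, F1 p) + ∑' p, F1' p := by
    rw [← Summable.tsum_add hsF1 hsF1']
    exact tsum_congr hHsplit
  have hF1eq : ∑' p, F1 p = ∑' p, F1' p := by
    apply tsum_eq_tsum_of_ne_zero_bij (fun x => ((x : ℕ × ℕ).1, (x : ℕ × ℕ).1 - (x : ℕ × ℕ).2))
    · rintro ⟨p, hp⟩ ⟨q, hq⟩ h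
      simp only [Function.mem_support, hF1'] at hp hq
      have hcp : p.2 < p.1 ∧ 0 < p.2 := by by_contra hc; simp [hc] at hp
      have hcq : q.2 < q.1 ∧ 0 < q.2 := by by_contra hc; simp [hc] at hq
      simp only [Prod.mk.injEq] at h
      apply Subtype.ext
      obtain ⟨h1, h2⟩ := h
      have : p.1 = q.1 ∧ p.2 = q.2 := by omega
      exact Prod.ext this.1 this.2
    · intro p hp
      simp only [Function.mem_support, hF1] at hp
      have hc : p.2 < p.1 ∧ 0 < p.2 := by by_contra h; simp [h] at hp
      refine ⟨⟨(p.1, p.1 - p.2), ?_⟩, ?_⟩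
      · simp only [Function.mem_support, hF1']
        rw [if_pos (by constructor <;> omega)]
        have : p.1 - (p.1 - p.2) = p.2 := by omega
        rw [this]
        rw [if_pos hc] at hp
        exact hp
      · dsimp only
        have : p.1 - (p.1 - p.2) = p.2 := by omega
        rw [this]
    · rintro ⟨p, hp⟩
      simp only [Function.mem_support, hF1'] at hp
      have hc : p.2 < p.1 ∧ 0 < p.2 := by by_contra h; simp [h] at hp
      simp only [hF1, hF1']
      rw [if_pos (by constructor <;> omega), if_pos hc]
  have hLi2z : Li2 1 1 z z = ∑' p, F1 p := by
    rw [Li2]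
    apply tsum_congr
    intro p
    simp only [hF1, pow_one]
    by_cases h : p.2 < p.1 ∧ 0 < p.2
    · rw [if_pos h, if_pos h, ← pow_add]
      congr 2
      omega
    · rw [if_neg h, if_neg h]
  constructor
  · rw [hsq, htsumGH, htsumH, ← hF1eq, hLi2z]; ring
  · rw [hsq, htsum_split, hST, hDLi, hTLi2]; ring
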